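/- If a partite set V_i in a multipartite tournament is, for every other partite set, either balanced with it or dominates it, then V_i contains a 3-Duke of the whole multipartite tournament. -/
import Mathlib


/-- An orientation of a complete multipartite graph: vertices `V`, partite sets
given as fibers of `part : V → ι`, and `peck` the arc relation. Between any two
vertices in different partite sets there is exactly one arc, and there are no
arcs within a partite set. -/
structure MTour (V : Type*) (ι : Type*) where
  part : V → ι
  peck : V → V → Prop
  complete : ∀ u v, part u ≠ part v → peck u v ∨ peck v u
  inter : ∀ u v, peck u v → part u ≠ part v
  asymm : ∀ u v, peck u v → ¬ peck v u

namespace MTour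

variable {V ι : Type*}

/-- There is a directed path of length at most `m` from `d` to `c`. -/
def hasPath (T : MTour V ι) (m : ℕ) (d c : V) : Prop :=
  ∃ k ≤ m, ∃ f : ℕ → V, f 0 = d ∧ f k = c ∧ ∀ i < k, T.peck (f i) (f (i + 1))

/-- `d` is an `m`-Duke: every vertex in a different partite set is reachable
from `d` by a directed path of length at most `m`. -/
def isDuke (T : MTour V ι) (m : ℕ) (d : V) : Prop :=
  ∀ c, T.part c ≠ T.part d → T.hasPath m d c

/-- `d` is an `m`-King: every other vertex is reachable from `d` by a directed
path of length at most `m`. -/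
def isKing (T : MTour V ι) (m : ℕ) (d : V) : Prop :=
  ∀ c, c ≠ d → T.hasPath m d c

/-- The out-degree of a vertex. -/
noncomputable def outDeg (T : MTour V ι) (v : V) : ℕ :=
  Nat.card {w // T.peck v w}

/-- `e` eclipses `d`: same partite set, `e` pecks everything `d` pecks, and
at least one vertex `d` does not peck. -/
def eclipses (T : MTour V ι) (e d : V) : Prop :=
  T.part e = T.part d ∧ (∀ c, T.peck d c → T.peck e c) ∧ ∃ c, T.peck e c ∧ ¬ T.peck d c

/-- `d` is non-eclipsed: no vertex of its partite set eclipses it. -/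
def nonEclipsed (T : MTour V ι) (d : V) : Prop :=
  ∀ e, ¬ T.eclipses e d

/-- Partite set `i` dominates partite set `j`: some vertex of `i` pecks all of `j`. -/
def Dominates (T : MTour V ι) (i j : ι) : Prop :=
  ∃ v, T.part v = i ∧ ∀ w, T.part w = j → T.peck v w

end MTour

/-- If a nonempty partite set `i` either dominates or is balanced with every
other partite set, then `i` contains a 3-Duke. -/
theorem stmt17 {V ι : Type*} [Finite V] (T : MTour V ι) (i : ι)
    (hne : ∃ v, T.part v = i)
    (h : ∀ j, j ≠ i → T.Dominates i j ∨ (¬ T.Dominates i j ∧ ¬ T.Dominates j i)) :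
    ∃ d, T.part d = i ∧ T.isDuke 3 d := by
  classical
  haveI := Fintype.ofFinite V
  obtain ⟨v0, hv0⟩ := hne
  have hsne : (Finset.univ.filter (fun v => T.part v = i)).Nonempty :=
    ⟨v0, by simp [hv0]⟩
  obtain ⟨d, hd, hmax⟩ := Finset.exists_max_image _ T.outDeg hsne
  simp only [Finset.mem_filter, Finset.mem_univ, true_and] at hd
  refine ⟨d, hd, ?_⟩
  intro c hc
  by_cases hdc : T.peck d c
  · exact ⟨1, by norm_num, fun n => if n = 0 then d else c, by simp, by simp, by
      intro j hj; interval_cases j; simpa⟩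
  · have hcd : T.peck c d := (T.complete c d hc).resolve_right hdc
    have hvc : ∃ v, T.part v = i ∧ T.peck v c := by
      rcases h (T.part c) (by rwa [hd] at hc) with hdom | ⟨_, hnd⟩
      · obtain ⟨v, hv, hall⟩ := hdom
        exact ⟨v, hv, hall c rfl⟩
      · by_contra hne'
        push_neg at hne'
        exact hnd ⟨c, rfl, fun w hw =>
          (T.complete c w (by rw [hw, ← hd]; exact hc)).resolve_right
            (fun hp => hne' w hw hp)⟩
    obtain ⟨v, hvi, hvc⟩ := hvc
    by_cases hx : ∃ x, T.peck d x ∧ T.peck x v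
    · obtain ⟨x, h1, h2⟩ := hx
      exact ⟨3, le_refl 3,
        fun n => if n = 0 then d else if n = 1 then x else if n = 2 then v else c,
        by simp, by simp, by
          intro j hj; interval_cases j <;> simp_all⟩
    · exfalso
      push_neg at hx
      have hsub : {w | T.peck d w} ⊂ {w | T.peck v w} := by
        constructor
        · intro w hw
          have hpw : T.part v ≠ T.part w := by
            rw [hvi, ← hd]; exact T.inter d w hw
          exact (T.complete v w hpw).resolve_right (hx w hw)
        · intro hsup
          exact hdc (hsup hvc)
      have hlt : T.outDeg d < T.outDeg v := by
        have h1 : T.outDeg d = Set.ncard {w | T.peck d w} := Nat.card_coe_set_eq _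
        have h2 : T.outDeg v = Set.ncard {w | T.peck v w} := Nat.card_coe_set_eq _
        rw [h1, h2]
        exact Set.ncard_lt_ncard hsub (Set.toFinite _)
      have hle : T.outDeg v ≤ T.outDeg d := hmax v (by simp [hvi])
      omega
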